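/- Let Q be a filtered-permutation quandle in which each A_i is a finite abelian group generated by {x_i(k) : k ∈ ℤ/r}. Then the commutator subgroup of the structure group G(Q,◁) is isomorphic to the quotient of the direct sum ⊕_{i ∈ ℤ/r} A_i by the subgroup generated by the elements ι_i(x_i(j−i)) + ι_j(x_j(i−j)) for all i,j ∈ ℤ/r, where ι_i : A_i → ⊕_k A_k denotes the canonical inclusion. -/

import Mathlib

variable {X : Type*}

/-- The relators `g_a g_b (g_b g_{a ◁ b})⁻¹` of the structure group. -/
def structureRels (op : X → X → X) : Set (FreeGroup X) :=
  {w | ∃ a b : X,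
    w = FreeGroup.of a * FreeGroup.of b * (FreeGroup.of b * FreeGroup.of (op a b))⁻¹}

/-- The structure group `⟨g_a, a ∈ X | g_a g_b = g_b g_{a ◁ b}⟩` of a quandle. -/
abbrev StructureGroup (op : X → X → X) : Type _ := PresentedGroup (structureRels op)

/-- The filtered-permutation (FP) quandle operation on `⊔_{i ∈ ℤ/r} A i`:
`a ◁ b = a + x i (j - i)` for `a ∈ A i`, `b ∈ A j`. -/
def fpOp {r : ℕ} (A : ZMod r → Type*) [∀ i, AddCommGroup (A i)]
    (x : (i : ZMod r) → ZMod r → A i) :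
    (Σ i, A i) → (Σ i, A i) → (Σ i, A i) :=
  fun a b => ⟨a.1, a.2 + x a.1 (b.1 - a.1)⟩

section CExtSec
variable {M : Type*} [AddCommGroup M] {ι : Type*} [Fintype ι]

def blin (c : ι → ι → M) (m n : ι → ℤ) : M := ∑ i, ∑ j, (m i * n j) • c i j

theorem blin_add_left (c : ι → ι → M) (m m' n : ι → ℤ) :
    blin c (m + m') n = blin c m n + blin c m' n := by
  simp only [blin, Pi.add_apply, add_mul, add_smul, Finset.sum_add_distrib]

theorem blin_add_right (c : ι → ι → M) (m n n' : ι → ℤ) :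
    blin c m (n + n') = blin c m n + blin c m n' := by
  simp only [blin, Pi.add_apply, mul_add, add_smul, Finset.sum_add_distrib]

theorem blin_zero_left (c : ι → ι → M) (n : ι → ℤ) : blin c 0 n = 0 := by simp [blin]
theorem blin_zero_right (c : ι → ι → M) (m : ι → ℤ) : blin c m 0 = 0 := by simp [blin]
theorem blin_neg_left (c : ι → ι → M) (m n : ι → ℤ) : blin c (-m) n = - blin c m n := by
  simp [blin, neg_mul, neg_smul, Finset.sum_neg_distrib]
theorem blin_neg_right (c : ι → ι → M) (m n : ι → ℤ) : blin c m (-n) = - blin c m n := by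
  simp [blin, mul_neg, neg_smul, Finset.sum_neg_distrib]

theorem blin_single_single [DecidableEq ι] (c : ι → ι → M) (i j : ι) :
    blin c (Pi.single i 1) (Pi.single j 1) = c i j := by
  simp [blin, Pi.single_apply, ite_smul, mul_ite, ite_mul, Finset.sum_ite_eq]

/-- Central extension of `ι → ℤ` by `M` along the "cocycle" given by `c`. -/
structure CExt {M : Type*} {ι : Type*} (c : ι → ι → M) : Type _ where
  fst : M
  snd : ι → ℤ

namespace CExt
variable {c : ι → ι → M}

instance : Mul (CExt c) := ⟨fun a b => ⟨a.fst + b.fst + blin c a.snd b.snd, a.snd + b.snd⟩⟩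
instance : One (CExt c) := ⟨⟨0, 0⟩⟩
instance : Inv (CExt c) := ⟨fun a => ⟨-a.fst + blin c a.snd a.snd, -a.snd⟩⟩

@[simp] theorem mul_fst (a b : CExt c) : (a * b).fst = a.fst + b.fst + blin c a.snd b.snd := rfl
@[simp] theorem mul_snd (a b : CExt c) : (a * b).snd = a.snd + b.snd := rfl
@[simp] theorem one_fst : (1 : CExt c).fst = 0 := rfl
@[simp] theorem one_snd : (1 : CExt c).snd = 0 := rfl
@[simp] theorem inv_fst (a : CExt c) : (a⁻¹).fst = -a.fst + blin c a.snd a.snd := rfl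
@[simp] theorem inv_snd (a : CExt c) : (a⁻¹).snd = -a.snd := rfl

theorem ext' {a b : CExt c} (h1 : a.fst = b.fst) (h2 : a.snd = b.snd) : a = b := by
  cases a; cases b; cases h1; cases h2; rfl

instance : Group (CExt c) where
  mul_assoc a b d := ext'
    (by simp [blin_add_left, blin_add_right]; abel) (by simp [add_assoc])
  one_mul a := ext' (by simp [blin_zero_left]) (by simp)
  mul_one a := ext' (by simp [blin_zero_right]) (by simp)
  inv_mul_cancel a := ext' (by simp [blin_neg_left]) (by simp)

/-- Second component as a homomorphism. -/
def sndHom (c : ι → ι → M) : CExt c →* Multiplicative (ι → ℤ) where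
  toFun a := Multiplicative.ofAdd a.snd
  map_one' := rfl
  map_mul' a b := rfl

end CExt
end CExtSec

section FP
variable {r : ℕ} {A : ZMod r → Type*} [∀ i, AddCommGroup (A i)]
  (x : (i : ZMod r) → ZMod r → A i)

/-- The generator `g_{(i,a)}` of the structure group. -/
def fpGen (i : ZMod r) (a : A i) : StructureGroup (fpOp A x) :=
  PresentedGroup.of ⟨i, a⟩

/-- The generator at `0` in component `i`. -/
def fpT (i : ZMod r) : StructureGroup (fpOp A x) := fpGen x i 0

/-- `u_{(i,a)} = g_{(i,a)} t_i⁻¹`. -/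
def fpU (i : ZMod r) (a : A i) : StructureGroup (fpOp A x) :=
  fpGen x i a * (fpT x i)⁻¹

theorem fpRel (i j : ZMod r) (a : A i) (b : A j) :
    fpGen x i a * fpGen x j b = fpGen x j b * fpGen x i (a + x i (j - i)) := by
  have hmem : (FreeGroup.of (⟨i, a⟩ : Σ k, A k) * FreeGroup.of (⟨j, b⟩ : Σ k, A k) *
      (FreeGroup.of (⟨j, b⟩ : Σ k, A k) *
        FreeGroup.of (fpOp A x ⟨i, a⟩ ⟨j, b⟩))⁻¹) ∈ structureRels (fpOp A x) :=
    ⟨⟨i, a⟩, ⟨j, b⟩, rfl⟩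
  have h1 : PresentedGroup.mk (structureRels (fpOp A x))
      (FreeGroup.of (⟨i, a⟩ : Σ k, A k) * FreeGroup.of (⟨j, b⟩ : Σ k, A k) *
      (FreeGroup.of (⟨j, b⟩ : Σ k, A k) * FreeGroup.of (fpOp A x ⟨i, a⟩ ⟨j, b⟩))⁻¹) = 1 :=
    (QuotientGroup.eq_one_iff _).mpr (Subgroup.subset_normalClosure hmem)
  rw [map_mul, map_inv, map_mul, map_mul, mul_inv_eq_one] at h1
  exact h1

theorem fpGen_conj (i : ZMod r) (a : A i) (k : ZMod r) :
    fpGen x i (a + x i k) = (fpT x (i + k))⁻¹ * fpGen x i a * fpT x (i + k) := by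
  have h : fpGen x i a * fpT x (i + k) = fpT x (i + k) * fpGen x i (a + x i k) := by
    have := fpRel x i (i + k) a 0
    rwa [add_sub_cancel_left] at this
  rw [mul_assoc, h, inv_mul_cancel_left]

theorem fpU_central (j : ZMod r) (b : A j) (g : StructureGroup (fpOp A x)) :
    fpU x j b * g = g * fpU x j b := by
  have hg : g ∈ Subgroup.closure
      (Set.range (PresentedGroup.of : (Σ k, A k) → StructureGroup (fpOp A x))) := by
    rw [PresentedGroup.closure_range_of]; trivial
  induction hg using Subgroup.closure_induction with
  | mem g hg =>
    obtain ⟨⟨i, a⟩, rfl⟩ := hg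
    have h0 := fpRel x i j a 0
    have st : SemiconjBy (fpT x j) (fpGen x i (a + x i (j - i))) (fpGen x i a) := h0.symm
    have h1 := st.inv_symm_left
    show fpGen x j b * (fpT x j)⁻¹ * fpGen x i a
        = fpGen x i a * (fpGen x j b * (fpT x j)⁻¹)
    calc fpGen x j b * (fpT x j)⁻¹ * fpGen x i a
        = fpGen x j b * ((fpT x j)⁻¹ * fpGen x i a) := by rw [mul_assoc]
      _ = fpGen x j b * (fpGen x i (a + x i (j - i)) * (fpT x j)⁻¹) := by rw [h1]
      _ = fpGen x i a * fpGen x j b * (fpT x j)⁻¹ := by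
            rw [fpRel x i j a b, mul_assoc]
      _ = fpGen x i a * (fpGen x j b * (fpT x j)⁻¹) := by rw [mul_assoc]
  | one => rw [mul_one, one_mul]
  | mul g h _ _ ih1 ih2 =>
    rw [← mul_assoc, ih1, mul_assoc, ih2, mul_assoc]
  | inv g _ ih =>
    exact (Commute.inv_right ih : Commute _ _)

theorem fpU_mul_t (i : ZMod r) (a : A i) : fpU x i a * fpT x i = fpGen x i a := by
  rw [fpU, inv_mul_cancel_right]

theorem fpU_zero (i : ZMod r) : fpU x i 0 = 1 := by
  rw [fpU, fpT, mul_inv_cancel]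

theorem fpU_x_eq (i : ZMod r) (k : ZMod r) :
    fpU x i (x i k) = (fpT x (i + k))⁻¹ * fpT x i * fpT x (i + k) * (fpT x i)⁻¹ := by
  have h := fpGen_conj x i 0 k
  rw [zero_add] at h
  rw [fpU, h]; rfl

theorem fpU_add_xk (i : ZMod r) (a : A i) (k : ZMod r) :
    fpU x i (a + x i k) = fpU x i a * fpU x i (x i k) := by
  have hc := fpU_central x i a (fpT x (i + k))⁻¹
  calc fpU x i (a + x i k)
      = (fpT x (i + k))⁻¹ * fpGen x i a * fpT x (i + k) * (fpT x i)⁻¹ := by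
        rw [fpU, fpGen_conj x i a k]
    _ = (fpT x (i + k))⁻¹ * (fpU x i a * fpT x i) * fpT x (i + k) * (fpT x i)⁻¹ := by
        rw [fpU_mul_t]
    _ = fpU x i a * ((fpT x (i + k))⁻¹ * fpT x i * fpT x (i + k) * (fpT x i)⁻¹) := by
        rw [← mul_assoc, ← mul_assoc, ← hc]; group
    _ = fpU x i a * fpU x i (x i k) := by rw [fpU_x_eq]

theorem fpU_add {i : ZMod r} (hgen : AddSubgroup.closure (Set.range (x i)) = ⊤)
    (a b : A i) : fpU x i (a + b) = fpU x i a * fpU x i b := by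
  let S : AddSubgroup (A i) :=
    { carrier := {cc | ∀ a : A i, fpU x i (a + cc) = fpU x i a * fpU x i cc}
      zero_mem' := fun a => by rw [add_zero, fpU_zero, mul_one]
      add_mem' := by
        intro c d hc hd a
        have h1 : a + (c + d) = (a + c) + d := by abel
        rw [h1, hd, hc, hd c, mul_assoc]
      neg_mem' := by
        intro c hc
        have hneg : fpU x i (-c) = (fpU x i c)⁻¹ := by
          have := hc (-c)
          rw [neg_add_cancel, fpU_zero] at this
          exact eq_inv_of_mul_eq_one_left this.symm
        intro a
        have := hc (a + -c)
        rw [add_assoc, neg_add_cancel, add_zero] at this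
        rw [hneg]
        exact eq_mul_inv_of_mul_eq this.symm
      }
  have hb : b ∈ S := by
    have : b ∈ AddSubgroup.closure (Set.range (x i)) := by rw [hgen]; trivial
    exact (AddSubgroup.closure_le S).mpr (by rintro _ ⟨k, rfl⟩; intro a; exact fpU_add_xk x i a k) this
  exact hb a

theorem fpU_neg {i : ZMod r} (hgen : AddSubgroup.closure (Set.range (x i)) = ⊤)
    (a : A i) : fpU x i (-a) = (fpU x i a)⁻¹ := by
  have := fpU_add x hgen a (-a)
  rw [add_neg_cancel, fpU_zero] at this
  exact eq_inv_of_mul_eq_one_right this.symm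

theorem fpU_pair (hgen : ∀ i, AddSubgroup.closure (Set.range (x i)) = ⊤) (i j : ZMod r) :
    fpU x i (x i (j - i)) * fpU x j (x j (i - j)) = 1 := by
  have h1 : fpU x i (x i (j - i)) = (fpT x j)⁻¹ * fpT x i * fpT x j * (fpT x i)⁻¹ := by
    have := fpU_x_eq x i (j - i)
    rwa [show i + (j - i) = j by ring] at this
  have h2 : fpU x j (x j (i - j)) = (fpT x i)⁻¹ * fpT x j * fpT x i * (fpT x j)⁻¹ := by
    have := fpU_x_eq x j (i - j)
    rwa [show j + (i - j) = i by ring] at this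
  have hc := fpU_central x i (x i (j - i)) ((fpT x i)⁻¹ * fpT x j)
  calc fpU x i (x i (j - i)) * fpU x j (x j (i - j))
      = (fpU x i (x i (j - i)) * ((fpT x i)⁻¹ * fpT x j)) * (fpT x i * (fpT x j)⁻¹) := by
        rw [h2]; group
    _ = (((fpT x i)⁻¹ * fpT x j) * fpU x i (x i (j - i))) * (fpT x i * (fpT x j)⁻¹) := by
        rw [hc]
    _ = 1 := by rw [h1]; group

theorem fpGen_add {i : ZMod r} (hgen : AddSubgroup.closure (Set.range (x i)) = ⊤)
    (a c : A i) : fpGen x i (a + c) = fpU x i c * fpGen x i a := by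
  rw [← fpU_mul_t x i (a + c), fpU_add x hgen, fpU_central x i a (fpU x i c),
    mul_assoc, fpU_mul_t]

end FP

section FP2
open scoped IsMulCommutative
variable {r : ℕ} [NeZero r] {A : ZMod r → Type*} [∀ i, AddCommGroup (A i)]
  (x : (i : ZMod r) → ZMod r → A i)

/-- The subgroup of relations in `⊕ᵢ A i`. -/
abbrev fpN : AddSubgroup (DirectSum (ZMod r) A) :=
  AddSubgroup.closure {z : DirectSum (ZMod r) A | ∃ i j : ZMod r,
    z = DirectSum.of A i (x i (j - i)) + DirectSum.of A j (x j (i - j))}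

/-- The quotient `(⊕ᵢ A i) / N`. -/
abbrev fpB := DirectSum (ZMod r) A ⧸ fpN x

theorem fpU_mem_center (i : ZMod r) (a : A i) :
    fpU x i a ∈ Subgroup.center (StructureGroup (fpOp A x)) :=
  Subgroup.mem_center_iff.mpr fun g => (fpU_central x i a g).symm

/-- `Θ : ⊕ᵢ A i →+ Additive (center G)`. -/
def fpTheta (hgen : ∀ i, AddSubgroup.closure (Set.range (x i)) = ⊤) :
    DirectSum (ZMod r) A →+ Additive (Subgroup.center (StructureGroup (fpOp A x))) :=
  DirectSum.toAddMonoid fun i => AddMonoidHom.mk'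
    (fun a => Additive.ofMul (⟨fpU x i a, fpU_mem_center x i a⟩ :
      Subgroup.center (StructureGroup (fpOp A x))))
    (fun a b => congrArg Additive.ofMul (Subtype.ext (fpU_add x (hgen i) a b)))

theorem fpTheta_vanish (hgen : ∀ i, AddSubgroup.closure (Set.range (x i)) = ⊤) :
    ∀ z ∈ fpN x, fpTheta x hgen z = 0 := by
  intro z hz
  have : fpN x ≤ (fpTheta x hgen).ker := by
    apply AddSubgroup.closure_le _ |>.mpr
    rintro _ ⟨i, j, rfl⟩
    have : fpTheta x hgen (DirectSum.of A i (x i (j - i)) + DirectSum.of A j (x j (i - j)))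
        = 0 := by
      rw [map_add, fpTheta, DirectSum.toAddMonoid_of, DirectSum.toAddMonoid_of]
      exact congrArg Additive.ofMul (Subtype.ext (fpU_pair x hgen i j))
    exact this
  exact this hz

/-- `Θ̄ : (⊕ᵢ A i)/N →+ Additive (center G)`. -/
def fpThetaBar (hgen : ∀ i, AddSubgroup.closure (Set.range (x i)) = ⊤) :
    fpB x →+ Additive (Subgroup.center (StructureGroup (fpOp A x))) :=
  QuotientAddGroup.lift (fpN x) (fpTheta x hgen)
    (fun z hz => (AddMonoidHom.mem_ker).mpr (fpTheta_vanish x hgen z hz))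

/-- The `G`-valued version of `Θ̄`. -/
def fpTh (hgen : ∀ i, AddSubgroup.closure (Set.range (x i)) = ⊤) (b : fpB x) :
    StructureGroup (fpOp A x) :=
  ((Additive.toMul (fpThetaBar x hgen b) : Subgroup.center (StructureGroup (fpOp A x))) :
    StructureGroup (fpOp A x))

variable (hgen : ∀ i, AddSubgroup.closure (Set.range (x i)) = ⊤)

theorem fpTh_of (i : ZMod r) (a : A i) :
    fpTh x hgen (QuotientAddGroup.mk (DirectSum.of A i a)) = fpU x i a := by
  rw [fpTh, fpThetaBar, QuotientAddGroup.lift_mk, fpTheta, DirectSum.toAddMonoid_of]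
  rfl

theorem fpTh_mul (b b' : fpB x) :
    fpTh x hgen (b + b') = fpTh x hgen b * fpTh x hgen b' := by
  rw [fpTh, map_add]; rfl

theorem fpTh_zero : fpTh x hgen 0 = 1 := by rw [fpTh, map_zero]; rfl

theorem fpTh_neg (b : fpB x) : fpTh x hgen (-b) = (fpTh x hgen b)⁻¹ := by
  rw [fpTh, map_neg]; rfl

theorem fpTh_central (b : fpB x) (g : StructureGroup (fpOp A x)) :
    fpTh x hgen b * g = g * fpTh x hgen b :=
  ((Subgroup.mem_center_iff.mp (Additive.toMul (fpThetaBar x hgen b)).2) g).symm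

end FP2

section FP3
variable {r : ℕ} [NeZero r] {A : ZMod r → Type*} [∀ i, AddCommGroup (A i)]
  (x : (i : ZMod r) → ZMod r → A i)

/-- The choice of "half" of the cocycle. -/
def fpC : ZMod r → ZMod r → fpB x := fun i j =>
  if j.val < i.val then QuotientAddGroup.mk (DirectSum.of A i (x i (j - i))) else 0

theorem fpC_self (i : ZMod r) : fpC x i i = 0 := by simp [fpC]

theorem fpC_diff (hx0 : ∀ i, x i 0 = 0) (i j : ZMod r) :
    fpC x i j = QuotientAddGroup.mk (DirectSum.of A i (x i (j - i))) + fpC x j i := by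
  rcases lt_trichotomy i.val j.val with h | h | h
  · have h1 : ¬ j.val < i.val := by omega
    rw [fpC, fpC, if_neg h1, if_pos h, eq_comm, ← QuotientAddGroup.mk_add]
    rw [QuotientAddGroup.eq_zero_iff]
    exact AddSubgroup.subset_closure ⟨i, j, rfl⟩
  · have h1 : i = j := ZMod.val_injective r h
    subst h1
    rw [sub_self, hx0, map_zero, QuotientAddGroup.mk_zero, zero_add]
  · have h1 : ¬ i.val < j.val := by omega
    rw [fpC, fpC, if_pos h, if_neg h1, add_zero]

/-- `φ : G →* CExt c`. -/
def fpPhi (hx0 : ∀ i, x i 0 = 0) :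
    StructureGroup (fpOp A x) →* CExt (fpC x) :=
  PresentedGroup.toGroup
    (f := fun s : Σ i, A i =>
      (⟨QuotientAddGroup.mk (DirectSum.of A s.1 s.2), Pi.single s.1 1⟩ : CExt (fpC x)))
    (by
      rintro w ⟨⟨i, a⟩, ⟨j, b⟩, rfl⟩
      rw [map_mul, map_mul, map_inv, map_mul, mul_inv_eq_one]
      simp only [FreeGroup.lift_apply_of]

      show (⟨QuotientAddGroup.mk (DirectSum.of A i a), Pi.single i 1⟩ : CExt (fpC x)) *
          ⟨QuotientAddGroup.mk (DirectSum.of A j b), Pi.single j 1⟩ =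
        (⟨QuotientAddGroup.mk (DirectSum.of A j b), Pi.single j 1⟩ : CExt (fpC x)) *
          ⟨QuotientAddGroup.mk (DirectSum.of A i (a + x i (j - i))), Pi.single i 1⟩
      refine CExt.ext' ?_ ?_
      · show QuotientAddGroup.mk (DirectSum.of A i a) + QuotientAddGroup.mk (DirectSum.of A j b) +
            blin (fpC x) (Pi.single i 1) (Pi.single j 1) =
          QuotientAddGroup.mk (DirectSum.of A j b) +
            QuotientAddGroup.mk (DirectSum.of A i (a + x i (j - i))) +
            blin (fpC x) (Pi.single j 1) (Pi.single i 1)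
        rw [blin_single_single, blin_single_single, fpC_diff x hx0 i j, map_add,
          QuotientAddGroup.mk_add]
        abel
      · show Pi.single i 1 + Pi.single j 1 = Pi.single j 1 + Pi.single i 1
        exact add_comm _ _)

theorem fpPhi_gen (hx0 : ∀ i, x i 0 = 0) (i : ZMod r) (a : A i) :
    fpPhi x hx0 (fpGen x i a) =
      ⟨QuotientAddGroup.mk (DirectSum.of A i a), Pi.single i 1⟩ := by
  exact PresentedGroup.toGroup.of _

theorem fpPhi_u (hx0 : ∀ i, x i 0 = 0) (i : ZMod r) (a : A i) :
    fpPhi x hx0 (fpU x i a) = ⟨QuotientAddGroup.mk (DirectSum.of A i a), 0⟩ := by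
  rw [fpU, map_mul, map_inv, fpT, fpPhi_gen, fpPhi_gen]
  refine CExt.ext' ?_ ?_
  · show QuotientAddGroup.mk (DirectSum.of A i a) +
        (-(QuotientAddGroup.mk (DirectSum.of A i (0:A i))) +
          blin (fpC x) (Pi.single i 1) (Pi.single i 1)) +
        blin (fpC x) (Pi.single i 1) (-(Pi.single i 1)) =
      QuotientAddGroup.mk (DirectSum.of A i a)
    rw [blin_neg_right, blin_single_single, fpC_self, map_zero, QuotientAddGroup.mk_zero]
    abel
  · show Pi.single i 1 + (-(Pi.single i 1)) = 0
    abel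

end FP3

section FP4
open scoped commutatorElement
variable {r : ℕ} [NeZero r] {A : ZMod r → Type*} [∀ i, AddCommGroup (A i)]
  (x : (i : ZMod r) → ZMod r → A i)
  (hx0 : ∀ i, x i 0 = 0)
  (hgen : ∀ i, AddSubgroup.closure (Set.range (x i)) = ⊤)

theorem fpPhi_th (b : fpB x) :
    fpPhi x hx0 (fpTh x hgen b) = ⟨b, 0⟩ := by
  refine QuotientAddGroup.induction_on b ?_
  intro y
  induction y using DirectSum.induction_on with
  | zero =>
    rw [QuotientAddGroup.mk_zero, fpTh_zero, map_one]
    exact CExt.ext' rfl rfl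
  | of i a => rw [fpTh_of, fpPhi_u]
  | add y y' ih ih' =>
    rw [QuotientAddGroup.mk_add, fpTh_mul, map_mul, ih, ih']
    refine CExt.ext' ?_ ?_
    · show (QuotientAddGroup.mk y : fpB x) + QuotientAddGroup.mk y' + blin (fpC x) 0 0 =
        QuotientAddGroup.mk (y + y')
      rw [blin_zero_left, add_zero, ← QuotientAddGroup.mk_add]
    · show (0 : ZMod r → ℤ) + 0 = 0
      rw [add_zero]

/-- The central subgroup `range Θ̄`. -/
def fpK : Subgroup (StructureGroup (fpOp A x)) where
  carrier := Set.range (fpTh x hgen)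
  one_mem' := ⟨0, fpTh_zero x hgen⟩
  mul_mem' := by rintro _ _ ⟨b, rfl⟩ ⟨b', rfl⟩; exact ⟨b + b', fpTh_mul x hgen b b'⟩
  inv_mem' := by rintro _ ⟨b, rfl⟩; exact ⟨-b, fpTh_neg x hgen b⟩

theorem fpK_normal : (fpK x hgen).Normal := ⟨by
  rintro _ ⟨b, rfl⟩ g
  rw [← fpTh_central x hgen b g, mul_inv_cancel_right]
  exact ⟨b, rfl⟩⟩

theorem fpCommutator_le :
    commutator (StructureGroup (fpOp A x)) ≤ fpK x hgen := by
  haveI := fpK_normal x hgen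
  have hcomm : ∀ q q' : StructureGroup (fpOp A x) ⧸ fpK x hgen, Commute q q' := by
    have hgenQ : Subgroup.closure ((QuotientGroup.mk' (fpK x hgen)) ''
        Set.range (PresentedGroup.of : (Σ k, A k) → StructureGroup (fpOp A x))) = ⊤ := by
      rw [← MonoidHom.map_closure, PresentedGroup.closure_range_of, ← MonoidHom.range_eq_map]
      exact MonoidHom.range_eq_top.mpr (QuotientGroup.mk'_surjective _)
    intro q q'
    have hq : q ∈ Subgroup.closure ((QuotientGroup.mk' (fpK x hgen)) ''
        Set.range (PresentedGroup.of : (Σ k, A k) → StructureGroup (fpOp A x))) := by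
      rw [hgenQ]; trivial
    have hq' : q' ∈ Subgroup.closure ((QuotientGroup.mk' (fpK x hgen)) ''
        Set.range (PresentedGroup.of : (Σ k, A k) → StructureGroup (fpOp A x))) := by
      rw [hgenQ]; trivial
    refine Subgroup.closure_induction₂ (p := fun a b _ _ => Commute a b)
      ?_ ?_ ?_ ?_ ?_ ?_ ?_ hq hq'
    · rintro _ _ ⟨_, ⟨⟨i, a⟩, rfl⟩, rfl⟩ ⟨_, ⟨⟨j, b⟩, rfl⟩, rfl⟩
      have key : fpGen x i a * fpGen x j b
          = fpGen x j b * (fpU x i (x i (j - i)) * fpGen x i a) := by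
        rw [fpRel x i j a b, fpGen_add x (hgen i)]
      have hu1 : (QuotientGroup.mk' (fpK x hgen)) (fpU x i (x i (j - i))) = 1 :=
        (QuotientGroup.eq_one_iff _).mpr
          ⟨QuotientAddGroup.mk (DirectSum.of A i (x i (j - i))), fpTh_of x hgen i _⟩
      have : (QuotientGroup.mk' (fpK x hgen)) (fpGen x i a) *
            (QuotientGroup.mk' (fpK x hgen)) (fpGen x j b) =
          (QuotientGroup.mk' (fpK x hgen)) (fpGen x j b) *
            (QuotientGroup.mk' (fpK x hgen)) (fpGen x i a) := by
        rw [← map_mul, key, map_mul, map_mul, hu1, one_mul]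
      exact this
    · exact fun y _ => Commute.one_left y
    · exact fun y _ => Commute.one_right y
    · exact fun a b c _ _ _ h1 h2 => h1.mul_left h2
    · exact fun a b c _ _ _ h1 h2 => h1.mul_right h2
    · exact fun a b _ _ h => h.inv_left
    · exact fun a b _ _ h => h.inv_right
  rw [commutator_def, Subgroup.commutator_le]
  intro g _ h _
  have : (QuotientGroup.mk' (fpK x hgen)) ⁅g, h⁆ = 1 := by
    rw [map_commutatorElement]
    exact commutatorElement_eq_one_iff_commute.mpr (hcomm _ _)
  exact (QuotientGroup.eq_one_iff _).mp this

theorem fpU_mem_commutator (hgen : ∀ i, AddSubgroup.closure (Set.range (x i)) = ⊤)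
    (i : ZMod r) (a : A i) :
    fpU x i a ∈ commutator (StructureGroup (fpOp A x)) := by
  let S : AddSubgroup (A i) :=
    { carrier := {c | fpU x i c ∈ commutator (StructureGroup (fpOp A x))}
      zero_mem' := by
        show fpU x i 0 ∈ commutator (StructureGroup (fpOp A x))
        rw [fpU_zero]; exact one_mem _
      add_mem' := by
        intro c d hc hd
        show fpU x i (c + d) ∈ commutator (StructureGroup (fpOp A x))
        rw [fpU_add x (hgen i)]; exact mul_mem hc hd
      neg_mem' := by
        intro c hc
        show fpU x i (-c) ∈ commutator (StructureGroup (fpOp A x))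
        rw [fpU_neg x (hgen i)]; exact inv_mem hc }
  have ha : a ∈ S := by
    have h1 : a ∈ AddSubgroup.closure (Set.range (x i)) := by rw [hgen i]; trivial
    refine (AddSubgroup.closure_le S).mpr ?_ h1
    rintro _ ⟨k, rfl⟩
    show fpU x i (x i k) ∈ commutator (StructureGroup (fpOp A x))
    have h2 : fpU x i (x i k) = ⁅(fpT x (i + k))⁻¹, fpT x i⁆ := by
      rw [fpU_x_eq, commutatorElement_def, inv_inv]
    rw [h2, commutator_def]
    exact Subgroup.commutator_mem_commutator (Subgroup.mem_top _) (Subgroup.mem_top _)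
  exact ha

theorem fpTh_mem_commutator (b : fpB x) :
    fpTh x hgen b ∈ commutator (StructureGroup (fpOp A x)) := by
  refine QuotientAddGroup.induction_on b ?_
  intro y
  induction y using DirectSum.induction_on with
  | zero => rw [QuotientAddGroup.mk_zero, fpTh_zero]; exact one_mem _
  | of i a => rw [fpTh_of]; exact fpU_mem_commutator x hgen i a
  | add y y' ih ih' =>
    rw [QuotientAddGroup.mk_add, fpTh_mul]; exact mul_mem ih ih'

end FP4

/-- For an FP quandle with finite components `A i`, each generated by
`{x i k}`, the commutator subgroup of the structure group is isomorphic to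
`(⊕ᵢ A i) / ⟨ιᵢ(x i (j-i)) + ιⱼ(x j (i-j))⟩`. -/
theorem commutator_of_fp_structureGroup (r : ℕ) (hr : 1 ≤ r) (A : ZMod r → Type*)
    [∀ i, AddCommGroup (A i)] [∀ i, Finite (A i)]
    (x : (i : ZMod r) → ZMod r → A i) (hx0 : ∀ i, x i 0 = 0)
    (hgen : ∀ i, AddSubgroup.closure (Set.range (x i)) = ⊤) :
    Nonempty (Additive ↥(commutator (StructureGroup (fpOp A x))) ≃+
      (DirectSum (ZMod r) A) ⧸
        AddSubgroup.closure {z : DirectSum (ZMod r) A | ∃ i j : ZMod r,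
          z = DirectSum.of A i (x i (j - i)) + DirectSum.of A j (x j (i - j))}) := by
  haveI : NeZero r := ⟨by omega⟩
  have hsnd : ∀ g : StructureGroup (fpOp A x),
      g ∈ commutator (StructureGroup (fpOp A x)) → (fpPhi x hx0 g).snd = 0 := by
    intro g hg
    have h1 := Abelianization.commutator_subset_ker
      ((CExt.sndHom (fpC x)).comp (fpPhi x hx0)) hg
    have h2 : Multiplicative.ofAdd (fpPhi x hx0 g).snd = 1 := h1
    exact congrArg Multiplicative.toAdd h2
  refine ⟨{ toFun := fun g =>
              (fpPhi x hx0 ((Additive.toMul g :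
                ↥(commutator (StructureGroup (fpOp A x)))) :
                  StructureGroup (fpOp A x))).fst,
            invFun := fun b => Additive.ofMul
              (⟨fpTh x hgen b, fpTh_mem_commutator x hgen b⟩ :
                ↥(commutator (StructureGroup (fpOp A x)))),
            left_inv := ?_, right_inv := ?_, map_add' := ?_ }⟩
  · intro g
    obtain ⟨b0, hb0⟩ := fpCommutator_le x hgen (Additive.toMul g).2
    have h1 : (fpPhi x hx0 ((Additive.toMul g :
        ↥(commutator (StructureGroup (fpOp A x)))) :
        StructureGroup (fpOp A x))).fst = b0 := by
      rw [← hb0, fpPhi_th x hx0 hgen]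
    refine Additive.toMul.injective (Subtype.ext ?_)
    show fpTh x hgen ((fpPhi x hx0 ((Additive.toMul g :
        ↥(commutator (StructureGroup (fpOp A x)))) : StructureGroup (fpOp A x))).fst)
      = ((Additive.toMul g : ↥(commutator (StructureGroup (fpOp A x)))) :
          StructureGroup (fpOp A x))
    rw [h1, hb0]
  · intro b
    show (fpPhi x hx0 (fpTh x hgen b)).fst = b
    rw [fpPhi_th x hx0 hgen]
  · intro g g'
    have hval : ((Additive.toMul (g + g') :
        ↥(commutator (StructureGroup (fpOp A x)))) : StructureGroup (fpOp A x))
        = ((Additive.toMul g : ↥(commutator (StructureGroup (fpOp A x)))) :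
            StructureGroup (fpOp A x)) *
          ((Additive.toMul g' : ↥(commutator (StructureGroup (fpOp A x)))) :
            StructureGroup (fpOp A x)) := rfl
    show (fpPhi x hx0 _).fst = _
    rw [hval, map_mul, CExt.mul_fst, hsnd _ (Additive.toMul g).2, blin_zero_left, add_zero]
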